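/- Invariant simplex: for every t ≥ 1, the iterates of Algorithm 3.1 satisfy Σ_{k=0}^q h^{t}_k Σ_{l=0}^{N-k} U_{l·} = Σ_{i,j} Y_{ij}. Hence all iterates h^t (t ≥ 1) lie in a fixed compact subset of R_{≥0}^{q+1} provided Σ_{l=0}^{N-q} U_{l·} > 0. -/
import Mathlib


open scoped BigOperators

/-- Csiszár I-divergence between nonnegative matrices, valued in `[0,∞]` (as `EReal`),
with conventions `0·log 0 = 0`, `0/0 = 0` and `p/0 = ∞` for `p > 0`. -/
noncomputable def IdivM {n m : ℕ} (Y Z : Fin n → Fin m → ℝ) : EReal :=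
  ∑ i, ∑ j, if Z i j = 0 ∧ 0 < Y i j then (⊤ : EReal)
    else ((Y i j * Real.log (Y i j / Z i j) - Y i j + Z i j : ℝ) : EReal)

/-- The columnwise convolution `(T(h)U)_{ij} = ∑_{k=0}^{min(i,q)} h_k U_{i-k,j}`. -/
def convM (q N m : ℕ) (h : Fin (q + 1) → ℝ) (U : Fin (N + 1) → Fin m → ℝ) :
    Fin (N + 1) → Fin m → ℝ :=
  fun i j => ∑ k : Fin (q + 1),
    if (k : ℕ) ≤ (i : ℕ) then
      h k * U ⟨(i : ℕ) - (k : ℕ), Nat.lt_of_le_of_lt (Nat.sub_le _ _) i.isLt⟩ j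
    else 0

/-- The partial row sum `∑_{l=0}^{N-k} U_{l·} = ∑_{l=0}^{N-k} ∑_j U_{lj}`. -/
def rowsum (N m : ℕ) (U : Fin (N + 1) → Fin m → ℝ) (k : ℕ) : ℝ :=
  ∑ l : Fin (N + 1), if (l : ℕ) ≤ N - k then ∑ j, U l j else 0

/-- One step of the alternating-minimization algorithm (Algorithm 3.1):
`h⁺_k = (h_k / ∑_{l=0}^{N-k} U_{l·}) ∑_j ∑_{i=k}^N Y_{ij} U_{i-k,j} / (T(h)U)_{ij}`. -/
noncomputable def upd (q N m : ℕ) (U Y : Fin (N + 1) → Fin m → ℝ)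
    (h : Fin (q + 1) → ℝ) : Fin (q + 1) → ℝ :=
  fun k => (h k / rowsum N m U k) *
    ∑ j, ∑ i : Fin (N + 1),
      if (k : ℕ) ≤ (i : ℕ) then
        Y i j * U ⟨(i : ℕ) - (k : ℕ), Nat.lt_of_le_of_lt (Nat.sub_le _ _) i.isLt⟩ j
          / convM q N m h U i j
      else 0

/-- The partial derivative `∂F/∂h_k` of `F(h) = I(Y‖T(h)U)`:
`∂F/∂h_k(h) = ∑_{l=0}^{N-k} U_{l·} - ∑_j ∑_{i=k}^N Y_{ij}U_{i-k,j}/(T(h)U)_{ij}`. -/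
noncomputable def gradF (q N m : ℕ) (U Y : Fin (N + 1) → Fin m → ℝ)
    (h : Fin (q + 1) → ℝ) (k : Fin (q + 1)) : ℝ :=
  rowsum N m U k -
    ∑ j, ∑ i : Fin (N + 1),
      if (k : ℕ) ≤ (i : ℕ) then
        Y i j * U ⟨(i : ℕ) - (k : ℕ), Nat.lt_of_le_of_lt (Nat.sub_le _ _) i.isLt⟩ j
          / convM q N m h U i j
      else 0

section Aux

variable (q N m : ℕ) (U Y : Fin (N + 1) → Fin m → ℝ)

lemma rowsum_nonneg (hU : ∀ i j, 0 ≤ U i j) (k : ℕ) : 0 ≤ rowsum N m U k := by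
  unfold rowsum
  refine Finset.sum_nonneg fun l _ => ?_
  split
  · exact Finset.sum_nonneg fun j _ => hU l j
  · exact le_rfl

lemma rowsum_anti {k : ℕ} (hU : ∀ i j, 0 ≤ U i j) (hk : k ≤ q) :
    rowsum N m U q ≤ rowsum N m U k := by
  unfold rowsum
  refine Finset.sum_le_sum fun l _ => ?_
  by_cases h1 : (l : ℕ) ≤ N - q
  · have h2 : (l : ℕ) ≤ N - k := h1.trans (Nat.sub_le_sub_left hk N)
    simp [h1, h2]
  · simp only [h1, if_false]
    split
    · exact Finset.sum_nonneg fun j _ => hU l j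
    · exact le_rfl

lemma convM_nonneg (h : Fin (q + 1) → ℝ) (hh : ∀ k, 0 ≤ h k)
    (hU : ∀ i j, 0 ≤ U i j) (i : Fin (N + 1)) (j : Fin m) :
    0 ≤ convM q N m h U i j := by
  unfold convM
  refine Finset.sum_nonneg fun k _ => ?_
  split
  · exact mul_nonneg (hh k) (hU _ _)
  · exact le_rfl

/-- The double sum appearing in `upd`. -/
noncomputable def Ssum (h : Fin (q + 1) → ℝ) (k : Fin (q + 1)) : ℝ :=
  ∑ j, ∑ i : Fin (N + 1),
      if (k : ℕ) ≤ (i : ℕ) then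
        Y i j * U ⟨(i : ℕ) - (k : ℕ), Nat.lt_of_le_of_lt (Nat.sub_le _ _) i.isLt⟩ j
          / convM q N m h U i j
      else 0

lemma upd_eq (h : Fin (q + 1) → ℝ) (k : Fin (q + 1)) :
    upd q N m U Y h k = (h k / rowsum N m U k) * Ssum q N m U Y h k := rfl

lemma Ssum_nonneg (h : Fin (q + 1) → ℝ) (hh : ∀ k, 0 ≤ h k)
    (hU : ∀ i j, 0 ≤ U i j) (hY : ∀ i j, 0 ≤ Y i j) (k : Fin (q + 1)) :
    0 ≤ Ssum q N m U Y h k := by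
  refine Finset.sum_nonneg fun j _ => Finset.sum_nonneg fun i _ => ?_
  split
  · exact div_nonneg (mul_nonneg (hY _ _) (hU _ _)) (convM_nonneg q N m U h hh hU i j)
  · exact le_rfl

lemma upd_nonneg (h : Fin (q + 1) → ℝ) (hh : ∀ k, 0 ≤ h k)
    (hU : ∀ i j, 0 ≤ U i j) (hY : ∀ i j, 0 ≤ Y i j) (k : Fin (q + 1)) :
    0 ≤ upd q N m U Y h k := by
  rw [upd_eq]
  exact mul_nonneg (div_nonneg (hh k) (rowsum_nonneg N m U hU k))
    (Ssum_nonneg q N m U Y h hh hU hY k)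

/-- The invariant: nonnegativity plus positivity of the convolution wherever `Y` is positive. -/
def InvP (h : Fin (q + 1) → ℝ) : Prop :=
  (∀ k, 0 ≤ h k) ∧ ∀ i j, 0 < Y i j → 0 < convM q N m h U i j

lemma inv_preserved (hU : ∀ i j, 0 ≤ U i j) (hY : ∀ i j, 0 ≤ Y i j)
    {h : Fin (q + 1) → ℝ} (hInv : InvP q N m U Y h) :
    InvP q N m U Y (upd q N m U Y h) := by
  obtain ⟨hh, hconv⟩ := hInv
  refine ⟨upd_nonneg q N m U Y h hh hU hY, fun i j hYpos => ?_⟩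
  -- find a witness k with h k * U (i-k) j > 0
  have hc := hconv i j hYpos
  unfold convM at hc
  have hc' : (∑ k : Fin (q + 1), (0:ℝ)) < ∑ k : Fin (q + 1),
      (if (k : ℕ) ≤ (i : ℕ) then
        h k * U ⟨(i : ℕ) - (k : ℕ), Nat.lt_of_le_of_lt (Nat.sub_le _ _) i.isLt⟩ j
      else 0) := by simpa using hc
  obtain ⟨k, -, hkpos⟩ := Finset.exists_lt_of_sum_lt hc'
  by_cases hki : (k : ℕ) ≤ (i : ℕ)
  swap
  · simp [hki] at hkpos
  rw [if_pos hki] at hkpos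
  set l : Fin (N + 1) := ⟨(i : ℕ) - (k : ℕ), Nat.lt_of_le_of_lt (Nat.sub_le _ _) i.isLt⟩
  have hhk : 0 < h k := by
    rcases (hh k).eq_or_lt with h' | h'
    · rw [← h'] at hkpos; simp at hkpos
    · exact h'
  have hUl : 0 < U l j := by
    rcases (hU l j).eq_or_lt with h' | h'
    · rw [← h'] at hkpos; simp at hkpos
    · exact h'
  -- rowsum k is positive
  have hlN : (l : ℕ) ≤ N - (k : ℕ) :=
    Nat.sub_le_sub_right (Nat.le_of_lt_succ i.isLt) (k : ℕ)
  have hrow : 0 < rowsum N m U (k : ℕ) := by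
    unfold rowsum
    refine Finset.sum_pos' (fun l' _ => ?_) ⟨l, Finset.mem_univ l, ?_⟩
    · split
      · exact Finset.sum_nonneg fun j' _ => hU l' j'
      · exact le_rfl
    · rw [if_pos hlN]
      exact Finset.sum_pos' (fun j' _ => hU l j') ⟨j, Finset.mem_univ j, hUl⟩
  -- Ssum is positive
  have hS : 0 < Ssum q N m U Y h k := by
    unfold Ssum
    refine Finset.sum_pos' (fun j' _ => Finset.sum_nonneg fun i' _ => ?_)
      ⟨j, Finset.mem_univ j, ?_⟩
    · split
      · exact div_nonneg (mul_nonneg (hY _ _) (hU _ _)) (convM_nonneg q N m U h hh hU i' j')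
      · exact le_rfl
    · refine Finset.sum_pos' (fun i' _ => ?_) ⟨i, Finset.mem_univ i, ?_⟩
      · split
        · exact div_nonneg (mul_nonneg (hY _ _) (hU _ _)) (convM_nonneg q N m U h hh hU i' j)
        · exact le_rfl
      · rw [if_pos hki]
        exact div_pos (mul_pos hYpos hUl) (hconv i j hYpos)
  have hupd : 0 < upd q N m U Y h k := by
    rw [upd_eq]
    exact mul_pos (div_pos hhk hrow) hS
  -- conclude positivity of the convolution of the updated h
  unfold convM
  refine Finset.sum_pos' (fun k' _ => ?_) ⟨k, Finset.mem_univ k, ?_⟩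
  · split
    · exact mul_nonneg (upd_nonneg q N m U Y h hh hU hY k') (hU _ _)
    · exact le_rfl
  · rw [if_pos hki]
    exact mul_pos hupd hUl

lemma rowsum_zero_entry {k : Fin (q + 1)} (hU : ∀ i j, 0 ≤ U i j)
    (hr : rowsum N m U (k : ℕ) = 0) {i : Fin (N + 1)} (hki : (k : ℕ) ≤ (i : ℕ)) (j : Fin m) :
    U ⟨(i : ℕ) - (k : ℕ), Nat.lt_of_le_of_lt (Nat.sub_le _ _) i.isLt⟩ j = 0 := by
  set l : Fin (N + 1) := ⟨(i : ℕ) - (k : ℕ), Nat.lt_of_le_of_lt (Nat.sub_le _ _) i.isLt⟩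
  have hlN : (l : ℕ) ≤ N - (k : ℕ) :=
    Nat.sub_le_sub_right (Nat.le_of_lt_succ i.isLt) (k : ℕ)
  unfold rowsum at hr
  have h1 : ∀ l' ∈ (Finset.univ : Finset (Fin (N + 1))), (0:ℝ) ≤
      if (l' : ℕ) ≤ N - (k : ℕ) then ∑ j', U l' j' else 0 := by
    intro l' _
    split
    · exact Finset.sum_nonneg fun j' _ => hU l' j'
    · exact le_rfl
  have h2 := (Finset.sum_eq_zero_iff_of_nonneg h1).mp hr l (Finset.mem_univ l)
  rw [if_pos hlN] at h2
  exact (Finset.sum_eq_zero_iff_of_nonneg fun j' _ => hU l j').mp h2 j (Finset.mem_univ j)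

lemma simplex_step (hU : ∀ i j, 0 ≤ U i j) (hY : ∀ i j, 0 ≤ Y i j)
    {h : Fin (q + 1) → ℝ} (hInv : InvP q N m U Y h) :
    ∑ k : Fin (q + 1), upd q N m U Y h k * rowsum N m U (k : ℕ)
      = ∑ i, ∑ j, Y i j := by
  obtain ⟨hh, hconv⟩ := hInv
  have step1 : ∀ k : Fin (q + 1),
      upd q N m U Y h k * rowsum N m U (k : ℕ) = h k * Ssum q N m U Y h k := by
    intro k
    rw [upd_eq]
    by_cases hr : rowsum N m U (k : ℕ) = 0
    · have hS0 : Ssum q N m U Y h k = 0 := by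
        unfold Ssum
        refine Finset.sum_eq_zero fun j _ => Finset.sum_eq_zero fun i _ => ?_
        split
        · rename_i hki
          rw [rowsum_zero_entry q N m U hU hr hki j]
          simp
        · rfl
      rw [hS0, hr]; ring
    · field_simp
  rw [Finset.sum_congr rfl fun k _ => step1 k]
  have step2 : ∀ k : Fin (q + 1), h k * Ssum q N m U Y h k =
      ∑ i : Fin (N + 1), ∑ j : Fin m, (if (k : ℕ) ≤ (i : ℕ) then
        (Y i j / convM q N m h U i j) *
          (h k * U ⟨(i : ℕ) - (k : ℕ), Nat.lt_of_le_of_lt (Nat.sub_le _ _) i.isLt⟩ j)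
      else 0) := by
    intro k
    unfold Ssum
    rw [Finset.mul_sum, Finset.sum_comm]
    refine Finset.sum_congr rfl fun i _ => ?_
    rw [Finset.mul_sum]
    refine Finset.sum_congr rfl fun j _ => ?_
    split
    · ring
    · ring
  rw [Finset.sum_congr rfl fun k _ => step2 k, Finset.sum_comm]
  refine Finset.sum_congr rfl fun i _ => ?_
  rw [Finset.sum_comm]
  refine Finset.sum_congr rfl fun j _ => ?_
  have e1 : ∀ k ∈ (Finset.univ : Finset (Fin (q + 1))),
      (if (k : ℕ) ≤ (i : ℕ) then (Y i j / convM q N m h U i j) *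
        (h k * U ⟨(i : ℕ) - (k : ℕ), Nat.lt_of_le_of_lt (Nat.sub_le _ _) i.isLt⟩ j) else 0)
      = (Y i j / convM q N m h U i j) *
        (if (k : ℕ) ≤ (i : ℕ) then
          h k * U ⟨(i : ℕ) - (k : ℕ), Nat.lt_of_le_of_lt (Nat.sub_le _ _) i.isLt⟩ j else 0) := by
    intro k _
    split <;> simp
  rw [Finset.sum_congr rfl e1, ← Finset.mul_sum]
  have : (∑ k : Fin (q + 1), if (k : ℕ) ≤ (i : ℕ) then
      h k * U ⟨(i : ℕ) - (k : ℕ), Nat.lt_of_le_of_lt (Nat.sub_le _ _) i.isLt⟩ j else 0)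
      = convM q N m h U i j := rfl
  rw [this]
  rcases (hY i j).eq_or_lt with h' | h'
  · rw [← h']; simp
  · rw [div_mul_cancel₀ _ (ne_of_gt (hconv i j h'))]

end Aux

/-- invariant simplex.  For every `t ≥ 1` the iterates of the algorithm
satisfy `∑_{k=0}^q hᵗ_k ∑_{l=0}^{N-k} U_{l·} = ∑_{ij} Y_{ij}`; hence, provided
`∑_{l=0}^{N-q} U_{l·} > 0`, all iterates `hᵗ` (`t ≥ 1`) lie in a fixed compact subset
of `ℝ₊^{q+1}`. -/
theorem invariant_simplex (q N m : ℕ) (hqN : q ≤ N)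
    (U Y : Fin (N + 1) → Fin m → ℝ)
    (hU : ∀ i j, 0 ≤ U i j) (hY : ∀ i j, 0 ≤ Y i j)
    (h₀ : Fin (q + 1) → ℝ) (h₀pos : ∀ k, 0 < h₀ k)
    (hfin : ∀ i j, 0 < Y i j → 0 < convM q N m h₀ U i j)
    (hrowq : 0 < rowsum N m U q) :
    (∀ t : ℕ, 1 ≤ t →
      ∑ k : Fin (q + 1), (upd q N m U Y)^[t] h₀ k * rowsum N m U (k : ℕ)
        = ∑ i, ∑ j, Y i j) ∧
    ∃ K : Set (Fin (q + 1) → ℝ), IsCompact K ∧ K ⊆ {h | ∀ k, 0 ≤ h k} ∧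
      ∀ t : ℕ, 1 ≤ t → (upd q N m U Y)^[t] h₀ ∈ K := by
  
  have hInv0 : InvP q N m U Y h₀ := ⟨fun k => (h₀pos k).le, hfin⟩
  set f := upd q N m U Y with hf
  have hInvt : ∀ t : ℕ, InvP q N m U Y (f^[t] h₀) := by
    intro t
    induction t with
    | zero => simpa using hInv0
    | succ t ih =>
      rw [Function.iterate_succ_apply']
      exact inv_preserved q N m U Y hU hY ih
  have hsimp : ∀ t : ℕ, 1 ≤ t →
      ∑ k : Fin (q + 1), f^[t] h₀ k * rowsum N m U (k : ℕ) = ∑ i, ∑ j, Y i j := by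
    intro t ht
    obtain ⟨s, rfl⟩ := Nat.exists_eq_add_of_le ht
    have hit : f^[1 + s] h₀ = f (f^[s] h₀) := by
      rw [Function.iterate_add_apply, Function.iterate_one]
    rw [hit]
    exact simplex_step q N m U Y hU hY (hInvt s)
  refine ⟨hsimp, ?_⟩
  set C := (∑ i, ∑ j, Y i j) / rowsum N m U q with hC
  refine ⟨Set.univ.pi fun _ : Fin (q + 1) => Set.Icc (0:ℝ) C,
    isCompact_univ_pi fun _ => isCompact_Icc, ?_, ?_⟩
  · intro h hmem k
    exact (hmem k (Set.mem_univ k)).1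
  · intro t ht
    refine Set.mem_univ_pi.mpr fun k => ⟨(hInvt t).1 k, ?_⟩
    have hb : f^[t] h₀ k * rowsum N m U q ≤ ∑ i, ∑ j, Y i j := by
      calc f^[t] h₀ k * rowsum N m U q
          ≤ f^[t] h₀ k * rowsum N m U (k : ℕ) :=
            mul_le_mul_of_nonneg_left
              (rowsum_anti q N m U hU (Nat.le_of_lt_succ k.isLt)) ((hInvt t).1 k)
        _ ≤ ∑ k' : Fin (q + 1), f^[t] h₀ k' * rowsum N m U (k' : ℕ) :=
            Finset.single_le_sum
              (fun k' _ => mul_nonneg ((hInvt t).1 k') (rowsum_nonneg N m U hU _))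
              (Finset.mem_univ k)
        _ = ∑ i, ∑ j, Y i j := hsimp t ht
    exact (le_div_iff₀ hrowq).mpr hb
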